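/- Let ω ∈ Ω_τ be symmetric around some p ∈ ℤ, i.e., ω(p+k) = ω(p−k) for all k ≥ 1. Then s := ω(p) belongs to {x,y,z} and ω(n) = ω⁽ˢ⁾(n−p) for all n ∈ ℤ; equivalently, for every n ∈ ℕ the word ω(p+1)ω(p+2)⋯ω(p+2ⁿ⁺¹−1) equals p⁽ⁿ⁾. -/

import Mathlib

/-- The four-letter alphabet `A = {a, x, y, z}`. -/
inductive A : Type
  | a | x | y | z
  deriving DecidableEq, Repr

def cyc : A → A
  | A.a => A.a | A.x => A.y | A.y => A.z | A.z => A.x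

def dsq (n : ℕ) : A :=
  if h : n % 2 = 0 then A.x else cyc (dsq (n / 2))
decreasing_by exact Nat.div_lt_self (by omega) (by omega)

lemma dsq_even (j : ℕ) : dsq (2 * j) = A.x := by
  rw [dsq]; simp

lemma dsq_odd (j : ℕ) : dsq (2 * j + 1) = cyc (dsq j) := by
  rw [dsq]
  have h1 : (2 * j + 1) % 2 = 1 := by omega
  have h2 : (2 * j + 1) / 2 = j := by omega
  simp [h1, h2]

def gfn (r : ℕ) : ℕ :=
  if r < 5 then 0 else 2 * gfn (r / 2) + 1
decreasing_by exact Nat.div_lt_self (by omega) (by omega)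

lemma gfn_small {r : ℕ} (h : r < 5) : gfn r = 0 := by rw [gfn]; simp [h]
lemma gfn_big {r : ℕ} (h : 5 ≤ r) : gfn r = 2 * gfn (r / 2) + 1 := by
  rw [gfn]; simp [show ¬ r < 5 by omega]

lemma cyc_inj : Function.Injective cyc := by
  intro u v h; cases u <;> cases v <;> simp_all [cyc]

lemma cyc_eq_x {w : A} (h : cyc w = A.x) : w = A.z := by
  cases w <;> simp_all [cyc]

lemma dsq_ne_a (n : ℕ) : dsq n ≠ A.a := by
  induction n using Nat.strong_induction_on with
  | _ n IH =>
    rcases Nat.even_or_odd n with ⟨t, ht⟩ | ⟨t, ht⟩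
    · rw [show n = 2 * t by omega, dsq_even]; simp
    · rw [ht, dsq_odd]
      have := IH t (by omega)
      cases h : dsq t <;> simp_all [cyc]

lemma no_zz (h : ℕ) (hh : 1 ≤ h) (h1 : dsq h = A.z) (h2 : dsq (h - 1) = A.z) : False := by
  rcases Nat.even_or_odd h with ⟨t, ht⟩ | ⟨t, ht⟩
  · rw [show h = 2 * t by omega, dsq_even] at h1; simp_all
  · rw [show h - 1 = 2 * t by omega, dsq_even] at h2; simp_all

lemma even_pal (j : ℕ) (hj : 3 ≤ j) (h0 : dsq j = dsq (j - 1)) (h1 : dsq (j + 1) = dsq (j - 2)) :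
    False := by
  rcases Nat.even_or_odd j with ⟨h, hh⟩ | ⟨h, hh⟩
  · -- j = 2h, h ≥ 2
    rw [show j = 2 * h by omega, dsq_even, show 2 * h - 1 = 2 * (h - 1) + 1 by omega,
      dsq_odd] at h0
    rw [show j + 1 = 2 * h + 1 by omega, dsq_odd, show j - 2 = 2 * (h - 1) by omega,
      dsq_even] at h1
    exact no_zz h (by omega) (cyc_eq_x h1) (cyc_eq_x h0.symm)
  · -- j = 2h+1, h ≥ 1
    rw [show j = 2 * h + 1 by omega, dsq_odd, show 2 * h + 1 - 1 = 2 * h by omega,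
      dsq_even] at h0
    rw [show j + 1 = 2 * (h + 1) by omega, dsq_even, show j - 2 = 2 * (h - 1) + 1 by omega,
      dsq_odd] at h1
    exact no_zz h (by omega) (cyc_eq_x h0) (cyc_eq_x h1.symm)

lemma mainP : ∀ r m : ℕ, r ≤ m → (∀ i, 1 ≤ i → i ≤ r → dsq (m + i) = dsq (m - i)) →
    ∀ i, 1 ≤ i → i ≤ gfn r → dsq (m + i) = dsq (i - 1) := by
  intro r
  induction r using Nat.strong_induction_on with
  | _ r IH =>
    intro m hrm hpal i hi1 hig
    by_cases h5 : r < 5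
    · rw [gfn_small h5] at hig; omega
    push_neg at h5
    have hmodd : m % 2 = 1 := by
      by_contra hme
      obtain ⟨j, hj⟩ : ∃ j, m = 2 * j := ⟨m / 2, by omega⟩
      have e1 := hpal 1 (by omega) (by omega)
      have e3 := hpal 3 (by omega) (by omega)
      rw [show m + 1 = 2 * j + 1 by omega, dsq_odd,
        show m - 1 = 2 * (j - 1) + 1 by omega, dsq_odd] at e1
      rw [show m + 3 = 2 * (j + 1) + 1 by omega, dsq_odd,
        show m - 3 = 2 * (j - 2) + 1 by omega, dsq_odd] at e3
      exact even_pal j (by omega) (cyc_inj e1) (cyc_inj e3)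
    obtain ⟨j, hjm⟩ : ∃ j, m = 2 * j + 1 := ⟨m / 2, by omega⟩
    have hj : r / 2 ≤ j := by omega
    have child : ∀ i', 1 ≤ i' → i' ≤ r / 2 → dsq (j + i') = dsq (j - i') := by
      intro i' h1 h2
      have e := hpal (2 * i') (by omega) (by omega)
      rw [show m + 2 * i' = 2 * (j + i') + 1 by omega, dsq_odd,
        show m - 2 * i' = 2 * (j - i') + 1 by omega, dsq_odd] at e
      exact cyc_inj e
    have H := IH (r / 2) (by omega) j hj child
    rw [gfn_big h5] at hig
    rcases Nat.even_or_odd i with ⟨t, ht⟩ | ⟨t, ht⟩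
    · have ht1 : 1 ≤ t := by omega
      rw [show m + i = 2 * (j + t) + 1 by omega, dsq_odd,
        show i - 1 = 2 * (t - 1) + 1 by omega, dsq_odd,
        H t ht1 (by omega), show t - 1 = t - 1 from rfl]
    · rw [show m + i = 2 * (j + t + 1) by omega, dsq_even,
        show i - 1 = 2 * t by omega, dsq_even]

def esq (k : ℕ) : A := if k % 2 = 0 then A.a else dsq (k / 2)

lemma esq_even (t : ℕ) : esq (2 * t) = A.a := by simp [esq, Nat.mul_mod_right]

lemma esq_odd (t : ℕ) : esq (2 * t + 1) = dsq t := by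
  have h1 : (2 * t + 1) % 2 = 1 := by omega
  have h2 : (2 * t + 1) / 2 = t := by omega
  simp [esq, h1, h2]

lemma gfn_le {r : ℕ} (h : 1 ≤ r) : gfn r ≤ r - 1 := by
  induction r using Nat.strong_induction_on with
  | _ r IH =>
    by_cases h5 : r < 5
    · rw [gfn_small h5]; omega
    · push_neg at h5
      rw [gfn_big h5]
      have := IH (r / 2) (by omega) (by omega)
      omega

lemma gfn_ge (J : ℕ) : J ≤ gfn (5 * 2 ^ J) := by
  induction J with
  | zero => simp
  | succ J IH =>
    have h2 : 5 * 2 ^ (J + 1) = 2 * (5 * 2 ^ J) := by ring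
    have h5 : (5:ℕ) ≤ 5 * 2 ^ (J + 1) := by
      have : (1:ℕ) ≤ 2 ^ (J + 1) := Nat.one_le_two_pow
      omega
    rw [gfn_big h5, h2, Nat.mul_div_cancel_left _ (by omega)]
    omega

lemma mainE (N c : ℕ) (hNc : N ≤ c) (h5 : 5 ≤ N)
    (hpal : ∀ j, 1 ≤ j → j ≤ N → esq (c + j) = esq (c - j)) :
    esq c ≠ A.a ∧ ∀ j, 1 ≤ j → j ≤ 2 * gfn (N / 2) + 1 → esq (c + j) = esq (j - 1) := by
  have hcodd : c % 2 = 1 := by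
    by_contra hce
    obtain ⟨m, hm⟩ : ∃ m, c = 2 * m := ⟨c / 2, by omega⟩
    have e1 := hpal 1 (by omega) (by omega)
    have e3 := hpal 3 (by omega) (by omega)
    rw [show c + 1 = 2 * m + 1 by omega, esq_odd,
      show c - 1 = 2 * (m - 1) + 1 by omega, esq_odd] at e1
    rw [show c + 3 = 2 * (m + 1) + 1 by omega, esq_odd,
      show c - 3 = 2 * (m - 2) + 1 by omega, esq_odd] at e3
    exact even_pal m (by omega) e1 e3
  obtain ⟨m, hm⟩ : ∃ m, c = 2 * m + 1 := ⟨c / 2, by omega⟩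
  have hm2 : N / 2 ≤ m := by omega
  have child : ∀ i, 1 ≤ i → i ≤ N / 2 → dsq (m + i) = dsq (m - i) := by
    intro i h1 h2
    have e := hpal (2 * i) (by omega) (by omega)
    rw [show c + 2 * i = 2 * (m + i) + 1 by omega, esq_odd,
      show c - 2 * i = 2 * (m - i) + 1 by omega, esq_odd] at e
    exact e
  have H := mainP (N / 2) m hm2 child
  constructor
  · rw [hm, esq_odd]; exact dsq_ne_a m
  · intro j h1 h2
    rcases Nat.even_or_odd j with ⟨t, ht⟩ | ⟨t, ht⟩
    · have ht1 : 1 ≤ t := by omega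
      rw [show c + j = 2 * (m + t) + 1 by omega, esq_odd,
        show j - 1 = 2 * (t - 1) + 1 by omega, esq_odd]
      exact H t ht1 (by omega)
    · rw [show c + j = 2 * (m + t + 1) by omega, esq_even,
        show j - 1 = 2 * t by omega, esq_even]


/-- The substitution `τ : a ↦ axa, x ↦ y, y ↦ z, z ↦ x`. -/
def tau : A → List A
  | A.a => [A.a, A.x, A.a]
  | A.x => [A.y]
  | A.y => [A.z]
  | A.z => [A.x]

/-- The substitution `τ` extended to finite words by concatenation. -/
def tauW (w : List A) : List A := w.flatMap tau

/-- `pw n = τⁿ(a)`, a word of length `2^(n+1) - 1`. -/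
def pw : ℕ → List A
  | 0 => [A.a]
  | n + 1 => tauW (pw n)

/-- The fixed point `η` of `τ`: the unique one-sided infinite word having every
`τⁿ(a)` as a prefix.  (Since `pw (n+1)` has length `2^(n+2) - 1 > n`, reading its
`n`-th letter is well defined and independent of the choice of a large enough iterate.) -/
def eta (n : ℕ) : A := (pw (n + 1)).getD n A.a

def tc (n : ℕ) : A := cyc^[n] A.x

lemma tc_ne_a (n : ℕ) : tc n ≠ A.a := by
  induction n with
  | zero => simp [tc]
  | succ n IH =>
    have : tc (n + 1) = cyc (tc n) := Function.iterate_succ_apply' _ _ _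
    rw [this]
    cases h : tc n <;> simp_all [cyc]

lemma pw_succ (n : ℕ) : pw (n + 1) = pw n ++ [tc n] ++ pw n := by
  induction n with
  | zero => decide
  | succ n IH =>
    have htc : tc (n + 1) = cyc (tc n) := Function.iterate_succ_apply' _ _ _
    have htau : tau (tc n) = [cyc (tc n)] := by
      have := tc_ne_a n
      cases h : tc n <;> simp_all [tau, cyc]
    calc pw (n + 1 + 1) = tauW (pw (n + 1)) := rfl
      _ = tauW (pw n ++ [tc n] ++ pw n) := by rw [IH]
      _ = tauW (pw n) ++ tauW [tc n] ++ tauW (pw n) := by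
            simp [tauW, List.flatMap_append]
      _ = pw (n + 1) ++ [cyc (tc n)] ++ pw (n + 1) := by
            simp [tauW, htau]; rfl
      _ = pw (n + 1) ++ [tc (n + 1)] ++ pw (n + 1) := by rw [htc]

lemma pw_length (n : ℕ) : (pw n).length = 2 ^ (n + 1) - 1 := by
  induction n with
  | zero => rfl
  | succ n IH =>
    rw [pw_succ]
    have : (0:ℕ) < 2 ^ (n + 1) := Nat.pow_pos (by omega)
    simp [IH]
    have h2 : (2:ℕ) ^ (n + 1 + 1) = 2 * 2 ^ (n + 1) := by ring
    omega

lemma dsq_pow (n : ℕ) : dsq (2 ^ n - 1) = tc n := by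
  induction n with
  | zero =>
    have h := dsq_even 0
    norm_num at h ⊢
    rw [h]; rfl
  | succ n IH =>
    have h1 : (1:ℕ) ≤ 2 ^ n := Nat.one_le_two_pow
    have : (2:ℕ) ^ (n + 1) - 1 = 2 * (2 ^ n - 1) + 1 := by
      have : (2:ℕ) ^ (n + 1) = 2 * 2 ^ n := by ring
      omega
    rw [this, dsq_odd, IH]
    exact (Function.iterate_succ_apply' _ _ _).symm

lemma dsq_per (n : ℕ) : ∀ j, j < 2 ^ n - 1 → dsq (2 ^ n + j) = dsq j := by
  induction n with
  | zero => intro j hj; simp at hj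
  | succ n IH =>
    intro j hj
    have hp : (2:ℕ) ^ (n + 1) = 2 * 2 ^ n := by ring
    rcases Nat.even_or_odd j with ⟨t, ht⟩ | ⟨t, ht⟩
    · rw [show 2 ^ (n+1) + j = 2 * (2 ^ n + t) by omega, dsq_even, show j = 2 * t by omega,
        dsq_even]
    · have h1 : (1:ℕ) ≤ 2 ^ n := Nat.one_le_two_pow
      rw [show 2 ^ (n+1) + j = 2 * (2 ^ n + t) + 1 by omega, dsq_odd, ht, dsq_odd,
        IH t (by omega)]

lemma esq_per (n : ℕ) : ∀ j, j < 2 ^ (n + 1) - 1 → esq (2 ^ (n + 1) + j) = esq j := by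
  intro j hj
  have hp : (2:ℕ) ^ (n + 1) = 2 * 2 ^ n := by ring
  have h1 : (1:ℕ) ≤ 2 ^ n := Nat.one_le_two_pow
  rcases Nat.even_or_odd j with ⟨t, ht⟩ | ⟨t, ht⟩
  · rw [show 2 ^ (n+1) + j = 2 * (2 ^ n + t) by omega, esq_even, show j = 2 * t by omega,
      esq_even]
  · rw [show 2 ^ (n+1) + j = 2 * (2 ^ n + t) + 1 by omega, esq_odd, ht, esq_odd,
      dsq_per n t (by omega)]

lemma pw_getD (n : ℕ) : ∀ k, k < 2 ^ (n + 1) - 1 → (pw n).getD k A.a = esq k := by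
  induction n with
  | zero =>
    intro k hk
    have : k = 0 := by omega
    subst this; decide
  | succ n IH =>
    intro k hk
    have hL : (pw n).length = 2 ^ (n + 1) - 1 := pw_length n
    have h1 : (1:ℕ) ≤ 2 ^ (n + 1) := Nat.one_le_two_pow
    have hp : (2:ℕ) ^ (n + 1 + 1) = 2 * 2 ^ (n + 1) := by ring
    rw [pw_succ]
    rcases lt_trichotomy k (2 ^ (n + 1) - 1) with h | h | h
    · rw [List.getD_append _ _ _ _ (by simp [hL]; omega)]
      rw [List.getD_append _ _ _ _ (by omega)]
      exact IH k h
    · rw [List.getD_append _ _ _ _ (by simp [hL]; omega)]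
      rw [List.getD_append_right _ _ _ _ (by omega)]
      rw [h, hL]
      simp
      rw [show 2 ^ (n+1) - 1 = 2 * (2 ^ n - 1) + 1 by
          have : (2:ℕ) ^ (n + 1) = 2 * 2 ^ n := by ring
          have : (1:ℕ) ≤ 2 ^ n := Nat.one_le_two_pow
          omega,
        esq_odd, dsq_pow]
    · rw [List.getD_append_right _ _ _ _ (by simp [hL]; omega)]
      have harg : k - ((pw n) ++ [tc n]).length = k - 2 ^ (n + 1) := by simp [hL]; omega
      rw [harg, IH _ (by omega)]
      have hper := esq_per n (k - 2 ^ (n + 1)) (by omega)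
      rw [← hper]
      congr 1
      omega

lemma eta_eq_esq (k : ℕ) : eta k = esq k := by
  have h1 : k < 2 ^ k := Nat.lt_two_pow_self
  have h2 : (2:ℕ) ^ k ≤ 2 ^ (k + 1 + 1) := Nat.pow_le_pow_right (by omega) (by omega)
  exact pw_getD (k + 1) k (by omega)


/-- `w` is a (finite) factor of `η`. -/
def IsFactorEta (w : List A) : Prop :=
  ∃ i : ℕ, w = (List.range w.length).map (fun k => eta (i + k))

/-- `Ω_τ`: the set of two-sided sequences all of whose finite factors are factors of `η`. -/
def OmegaTau (ω : ℤ → A) : Prop :=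
  ∀ (i : ℤ) (n : ℕ), IsFactorEta ((List.range n).map (fun k => ω (i + k)))

/-- The special two-sided sequence `ω⁽ˢ⁾`, with `ω⁽ˢ⁾(0) = s` and
`ω⁽ˢ⁾(k) = η(|k| - 1)` for `k ≠ 0`. -/
def omegaS (s : A) : ℤ → A := fun k => if k = 0 then s else eta (k.natAbs - 1)

lemma norm_do {α : Type*} (f : ℤ → α) (n : ℕ) :
    (List.map f (do let a ← List.range n; pure ((a:ℤ)))) =
      (List.range n).map (fun k => f (k:ℕ)) := by
  simp only [List.pure_def, List.bind_eq_flatMap]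
  rw [show ((List.range n).flatMap fun a => [((a:ℕ):ℤ)]) =
      (List.range n).map (fun a => ((a:ℕ):ℤ)) by
    induction (List.range n) with
    | nil => rfl
    | cons a l ih => simp [List.flatMap_cons, ih]]
  rw [List.map_map]
  rfl

lemma norm_do_len (n : ℕ) : (do let a ← List.range n; pure ((a:ℤ))).length = n := by
  have := congrArg List.length (norm_do (fun z => z) n)
  simpa using this

lemma getD_map_range (f : ℕ → A) {N t : ℕ} (h : t < N) :
    ((List.range N).map f).getD t A.a = f t := by
  rw [List.getD_eq_getElem _ _ (by simpa using h)]
  simp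

/-- If `ω ∈ Ω_τ` is symmetric around `p`, then `s = ω(p)` belongs to `{x,y,z}` and
`ω` is the translate by `p` of `ω⁽ˢ⁾`; equivalently, for every `n` the word
`ω(p+1)⋯ω(p+2^(n+1)-1)` equals `p⁽ⁿ⁾`. -/
theorem symmetric_word (ω : ℤ → A) (hω : OmegaTau ω) (p : ℤ)
    (hsym : ∀ k : ℕ, 1 ≤ k → ω (p + k) = ω (p - k)) :
    ω p ∈ ({A.x, A.y, A.z} : Set A) ∧
    (∀ n : ℤ, ω n = omegaS (ω p) (n - p)) ∧
    (∀ n : ℕ, (List.range (2 ^ (n + 1) - 1)).map (fun k => ω (p + 1 + k)) = pw n) := by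
  have main : ∀ N : ℕ, 5 ≤ N → ∃ c : ℕ, ω p = esq c ∧ esq c ≠ A.a ∧
      ∀ j : ℕ, 1 ≤ j → j ≤ 2 * gfn (N / 2) + 1 → ω (p + (j : ℤ)) = esq (j - 1) := by
    intro N hN
    obtain ⟨c0, hc0⟩ := hω (p - (N : ℤ)) (2 * N + 1)
    rw [norm_do] at hc0
    simp only [norm_do_len, List.length_map, List.length_range] at hc0
    have hpt : ∀ t : ℕ, t < 2 * N + 1 → ω (p - (N : ℤ) + (t : ℕ)) = esq (c0 + t) := by
      intro t ht
      have h := congrArg (fun l => l.getD t A.a) hc0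
      simp only [getD_map_range _ ht] at h
      rw [h, eta_eq_esq]
    set c := c0 + N with hc
    have hcen : ω p = esq c := by
      have h := hpt N (by omega)
      rw [show p - (N : ℤ) + (N : ℕ) = p by ring] at h
      exact h
    have hpal : ∀ j, 1 ≤ j → j ≤ N → esq (c + j) = esq (c - j) := by
      intro j h1 h2
      have hr := hpt (N + j) (by omega)
      have hl := hpt (N - j) (by omega)
      rw [show p - (N : ℤ) + ((N + j : ℕ) : ℤ) = p + (j : ℕ) by push_cast; ring] at hr
      rw [show p - (N : ℤ) + ((N - j : ℕ) : ℤ) = p - (j : ℕ) by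
        have : ((N - j : ℕ) : ℤ) = (N : ℤ) - (j : ℕ) := by omega
        rw [this]; ring] at hl
      rw [show c + j = c0 + (N + j) by omega, ← hr,
        show c - j = c0 + (N - j) by omega, ← hl]
      exact hsym j h1
    obtain ⟨hne, hconc⟩ := mainE N c (by omega) hN hpal
    refine ⟨c, hcen, hne, ?_⟩
    intro j h1 h2
    have hgle : gfn (N / 2) ≤ N / 2 - 1 := gfn_le (by omega)
    have hjN : j ≤ N := by omega
    have h := hpt (N + j) (by omega)
    rw [show p - (N : ℤ) + ((N + j : ℕ) : ℤ) = p + (j : ℕ) by push_cast; ring] at h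
    rw [h, show c0 + (N + j) = c + j by omega]
    exact hconc j h1 h2
  have hpa : ω p ≠ A.a := by
    obtain ⟨c, h1, h2, _⟩ := main 5 (by omega)
    rw [h1]; exact h2
  have key : ∀ k : ℕ, 1 ≤ k → ω (p + (k : ℤ)) = esq (k - 1) := by
    intro k hk
    have hgg := gfn_ge k
    have hpow : (1 : ℕ) ≤ 2 ^ k := Nat.one_le_two_pow
    have hN5 : 5 ≤ 2 * (5 * 2 ^ k) := by omega
    obtain ⟨c, _, _, hconc⟩ := main (2 * (5 * 2 ^ k)) hN5
    have hdiv : 2 * (5 * 2 ^ k) / 2 = 5 * 2 ^ k := by omega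
    exact hconc k hk (by rw [hdiv]; omega)
  refine ⟨?_, ?_, ?_⟩
  · cases h : ω p
    · exact absurd h hpa
    · simp
    · simp
    · simp
  · intro n
    rcases lt_trichotomy n p with h | h | h
    · set k := (p - n).toNat with hkdef
      have hk1 : 1 ≤ k := by omega
      have hnp : n = p - (k : ℤ) := by omega
      have hω1 : ω n = esq (k - 1) := by
        rw [hnp, ← hsym k hk1]; exact key k hk1
      have hne0 : n - p ≠ 0 := by omega
      have hna : (n - p).natAbs = k := by omega
      simp only [omegaS, if_neg hne0, hna]
      rw [eta_eq_esq]; exact hω1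
    · rw [h]; simp [omegaS]
    · set k := (n - p).toNat with hkdef
      have hk1 : 1 ≤ k := by omega
      have hnp : n = p + (k : ℤ) := by omega
      have hne0 : n - p ≠ 0 := by omega
      have hna : (n - p).natAbs = k := by omega
      simp only [omegaS, if_neg hne0, hna]
      rw [eta_eq_esq, hnp]; exact key k hk1
  · intro n
    rw [norm_do]
    apply List.ext_getElem
    · simp [pw_length]
    · intro k h1 h2
      simp only [List.getElem_map, List.getElem_range]
      have hk : k < 2 ^ (n + 1) - 1 := by
        have := pw_length n; omega
      have e1 : ω (p + 1 + (k : ℕ)) = esq k := by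
        have h := key (k + 1) (by omega)
        rw [show p + 1 + (k : ℕ) = p + ((k + 1 : ℕ) : ℤ) by push_cast; ring]
        simpa using h
      rw [e1, ← pw_getD n k hk]
      exact List.getD_eq_getElem _ _ h2
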